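/- Suppose S ⊆ [0,s] ∩ ℤ with 0 ∈ S. Then there is an optimal periodic covering of ℤ by translates of S whose period is at most 2^s. -/

import Mathlib

open Pointwise

/-- `τ(S,n)`: the minimal number of integer translates of `S` covering `{1,...,n}`. -/
noncomputable def tauZ (S : Finset ℤ) (n : ℕ) : ℕ :=
  sInf {m | ∃ T : Finset ℤ, T.card = m ∧ Finset.Icc (1 : ℤ) n ⊆ T + S}

/-- The covering density `τ(S)` of a finite set `S ⊂ ℤ`, as the infimum of `τ(S,n)/n`. -/
noncomputable def covDens (S : Finset ℤ) : ℝ :=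
  ⨅ n : ℕ+, (tauZ S n : ℝ) / n

namespace OptCover

open Classical in
noncomputable def stateSet (S : Finset ℤ) (s : ℕ) (T : Finset ℤ) (x : ℤ) : Finset ℤ :=
  (Finset.Icc 1 (s:ℤ)).filter (fun i => ∃ t ∈ T, t ≤ x ∧ x + i - t ∈ S)

/-- `(k, ℓ)` is good if there's a periodic covering with period `ℓ` and `k` pts/period. -/
def GoodPair (S : Finset ℤ) (k ℓ : ℕ) : Prop :=
  0 < ℓ ∧ ∃ T : Set ℤ, (∀ x : ℤ, x ∈ T ↔ x + (ℓ:ℤ) ∈ T) ∧ T + (S:Set ℤ) = Set.univ ∧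
    (T ∩ Set.Ico (0:ℤ) (ℓ:ℤ)).ncard = k

variable {S : Finset ℤ} {s : ℕ}

lemma mem_addF {T : Finset ℤ} {p : ℤ} : p ∈ T + S ↔ ∃ t ∈ T, p - t ∈ S := by
  rw [Finset.mem_add]
  constructor
  · rintro ⟨t, ht, a, ha, rfl⟩; exact ⟨t, ht, by simpa⟩
  · rintro ⟨t, ht, h⟩; exact ⟨t, ht, p - t, h, by ring⟩

lemma mem_addS {T : Set ℤ} {p : ℤ} : p ∈ T + (S:Set ℤ) ↔ ∃ t ∈ T, p - t ∈ S := by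
  rw [Set.mem_add]
  constructor
  · rintro ⟨t, ht, a, ha, rfl⟩; exact ⟨t, ht, by simpa using ha⟩
  · rintro ⟨t, ht, h⟩; exact ⟨t, ht, p - t, by simpa using h, by ring⟩

lemma tau_nonempty (h0 : (0:ℤ) ∈ S) (n : ℕ) :
    {m | ∃ T : Finset ℤ, T.card = m ∧ Finset.Icc (1 : ℤ) n ⊆ T + S}.Nonempty := by
  refine ⟨n, Finset.Icc (1:ℤ) n, ?_, ?_⟩
  · rw [Int.card_Icc]; omega
  · intro p hp
    exact mem_addF.mpr ⟨p, hp, by simpa⟩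

lemma tau_spec (h0 : (0:ℤ) ∈ S) (n : ℕ) :
    ∃ T : Finset ℤ, T.card = tauZ S n ∧ Finset.Icc (1 : ℤ) n ⊆ T + S :=
  Nat.sInf_mem (tau_nonempty h0 n)

lemma tau_le_of_cover {n : ℕ} {T : Finset ℤ} (h : Finset.Icc (1 : ℤ) n ⊆ T + S) :
    tauZ S n ≤ T.card :=
  Nat.sInf_le ⟨T, rfl, h⟩

lemma tau_le_self (h0 : (0:ℤ) ∈ S) (n : ℕ) : tauZ S n ≤ n := by
  have hcov : Finset.Icc (1:ℤ) n ⊆ Finset.Icc (1:ℤ) n + S := fun p hp =>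
    mem_addF.mpr ⟨p, hp, by simpa⟩
  have := tau_le_of_cover hcov
  rwa [Int.card_Icc, show ((n:ℤ) + 1 - 1).toNat = n by omega] at this

lemma tau_subadd (h0 : (0:ℤ) ∈ S) (a b : ℕ) : tauZ S (a + b) ≤ tauZ S a + tauZ S b := by
  obtain ⟨T₁, hc₁, hcov₁⟩ := tau_spec h0 a
  obtain ⟨T₂, hc₂, hcov₂⟩ := tau_spec h0 b
  have hcov : Finset.Icc (1:ℤ) (a + b : ℕ) ⊆ (T₁ ∪ T₂.image (· + (a:ℤ))) + S := by
    intro p hp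
    simp only [Finset.mem_Icc] at hp
    push_cast at hp
    rcases le_or_gt p a with h | h
    · obtain ⟨t, ht, hts⟩ := mem_addF.mp (hcov₁ (Finset.mem_Icc.mpr ⟨hp.1, h⟩))
      exact mem_addF.mpr ⟨t, Finset.mem_union_left _ ht, hts⟩
    · have : p - a ∈ Finset.Icc (1:ℤ) b := Finset.mem_Icc.mpr ⟨by omega, by omega⟩
      obtain ⟨t, ht, hts⟩ := mem_addF.mp (hcov₂ this)
      refine mem_addF.mpr ⟨t + a, Finset.mem_union_right _ ?_, by rw [show p - (t+a) = p - a - t by ring]; exact hts⟩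
      exact Finset.mem_image.mpr ⟨t, ht, rfl⟩
  calc tauZ S (a+b) ≤ _ := tau_le_of_cover hcov
  _ ≤ T₁.card + (T₂.image (· + (a:ℤ))).card := Finset.card_union_le _ _
  _ ≤ tauZ S a + tauZ S b := by
      have := Finset.card_image_le (s := T₂) (f := (· + (a:ℤ)))
      omega

lemma tau_mul (h0 : (0:ℤ) ∈ S) (K n : ℕ) : tauZ S (K * n) ≤ K * tauZ S n := by
  induction K with
  | zero => simpa using tau_le_self h0 0
  | succ K ih =>
    have := tau_subadd h0 (K * n) n
    rw [show (K+1) * n = K * n + n by ring]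
    have h3 : (K+1) * tauZ S n = K * tauZ S n + tauZ S n := by ring
    omega

lemma per_shift {T : Set ℤ} {ℓ : ℤ} (hper : ∀ x : ℤ, x ∈ T ↔ x + ℓ ∈ T) (j : ℤ) :
    ∀ x : ℤ, x ∈ T ↔ x + j * ℓ ∈ T := by
  induction j using Int.induction_on with
  | zero => simp
  | succ j ih =>
    intro x
    rw [ih x, hper (x + j * ℓ)]
    ring_nf
  | pred j ih =>
    intro x
    have h := hper (x + (-(j:ℤ) - 1) * ℓ)
    rw [show x + (-(j:ℤ)-1)*ℓ + ℓ = x + -(j:ℤ)*ℓ by ring] at h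
    rw [ih x, h]

lemma window_count {T : Set ℤ} {ℓ : ℤ} (hper : ∀ x : ℤ, x ∈ T ↔ x + ℓ ∈ T) (j : ℤ) :
    (T ∩ Set.Ico (j * ℓ) (j * ℓ + ℓ)).ncard = (T ∩ Set.Ico 0 ℓ).ncard := by
  have himg : (fun z => z + j * ℓ) '' (T ∩ Set.Ico 0 ℓ) = T ∩ Set.Ico (j*ℓ) (j*ℓ+ℓ) := by
    ext z
    constructor
    · rintro ⟨w, ⟨hw, hw0, hwl⟩, rfl⟩
      refine ⟨(per_shift hper j w).mp hw, ?_⟩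
      show j*ℓ ≤ w + j*ℓ ∧ w + j*ℓ < j*ℓ + ℓ
      omega
    · rintro ⟨hz, hz0, hzl⟩
      exact ⟨z - j * ℓ, ⟨(per_shift hper j (z - j*ℓ)).mpr (by simpa using hz), by omega, by omega⟩, by ring⟩
  rw [← himg, Set.ncard_image_of_injective _ (add_left_injective _)]

lemma mem_stateSet' {T : Finset ℤ} {x i : ℤ} :
    i ∈ stateSet S s T x ↔ (1 ≤ i ∧ i ≤ s) ∧ ∃ t ∈ T, t ≤ x ∧ x + i - t ∈ S := by
  simp [stateSet, Finset.mem_filter, Finset.mem_Icc]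

lemma sub_mem_bounds' (hS : S ⊆ Finset.Icc (0:ℤ) (s:ℤ)) {a : ℤ} (h : a ∈ S) :
    0 ≤ a ∧ a ≤ s := Finset.mem_Icc.mp (hS h)

/-- Splicing out a cycle shortens the covered interval. -/
lemma splice (hS : S ⊆ Finset.Icc (0:ℤ) (s:ℤ)) {T : Finset ℤ} {x y N : ℤ}
    (hxy : x < y) (hcov : Finset.Icc 1 N ⊆ T + S)
    (hA : stateSet S s T x = stateSet S s T y) :
    Finset.Icc (1:ℤ) (N - (y - x)) ⊆
      ((T.filter (· ≤ x)) ∪ ((T.filter (fun t => y < t)).image (· - (y - x)))) + S := by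
  intro p hp
  rw [Finset.mem_Icc] at hp
  rcases le_or_gt p x with h | h
  · obtain ⟨t, ht, hts⟩ := mem_addF.mp (hcov (Finset.mem_Icc.mpr ⟨hp.1, by omega⟩))
    have := sub_mem_bounds' hS hts
    exact mem_addF.mpr ⟨t, Finset.mem_union_left _ (Finset.mem_filter.mpr ⟨ht, by omega⟩), hts⟩
  · set ℓ := y - x with hℓ
    have hq : p + ℓ ∈ Finset.Icc (1:ℤ) N := Finset.mem_Icc.mpr ⟨by omega, by omega⟩
    obtain ⟨t, ht, hts⟩ := mem_addF.mp (hcov hq)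
    have hb := sub_mem_bounds' hS hts
    rcases le_or_gt t y with hty | hty
    · have hj : (p + ℓ - y) ∈ stateSet S s T y := by
        rw [mem_stateSet']
        refine ⟨⟨by omega, by omega⟩, t, ht, hty, by rw [show y + (p + ℓ - y) - t = p + ℓ - t by ring]; exact hts⟩
      rw [← hA, mem_stateSet'] at hj
      obtain ⟨hj1, t', ht', ht'x, ht's⟩ := hj
      refine mem_addF.mpr ⟨t', Finset.mem_union_left _ (Finset.mem_filter.mpr ⟨ht', ht'x⟩), ?_⟩
      rw [show p - t' = x + (p + ℓ - y) - t' by omega]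
      exact ht's
    · refine mem_addF.mpr ⟨t - ℓ, Finset.mem_union_right _ ?_, by rw [show p - (t - ℓ) = p + ℓ - t by ring]; exact hts⟩
      exact Finset.mem_image.mpr ⟨t, Finset.mem_filter.mpr ⟨ht, hty⟩, rfl⟩

lemma splice_card {T : Finset ℤ} {x y : ℤ} (hxy : x < y) :
    ((T.filter (· ≤ x)) ∪ ((T.filter (fun t => y < t)).image (· - (y - x)))).card
      + (T.filter (fun t => x < t ∧ t ≤ y)).card ≤ T.card := by
  classical
  set A := T.filter (· ≤ x)
  set B := T.filter (fun t => y < t)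
  set W := T.filter (fun t => x < t ∧ t ≤ y)
  have h1 : (A ∪ B.image (· - (y - x))).card ≤ A.card + B.card := by
    refine (Finset.card_union_le _ _).trans ?_
    have := Finset.card_image_le (s := B) (f := (· - (y - x)))
    omega
  have h2 : A.card + B.card + W.card ≤ T.card := by
    have hsub : A ∪ B ∪ W ⊆ T := by
      intro t ht
      rcases Finset.mem_union.mp ht with h | h
      · rcases Finset.mem_union.mp h with h | h
        · exact (Finset.mem_filter.mp h).1
        · exact (Finset.mem_filter.mp h).1
      · exact (Finset.mem_filter.mp h).1
    have hd1 : Disjoint A B := by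
      rw [Finset.disjoint_left]
      intro t hA hB
      have := (Finset.mem_filter.mp hA).2
      have := (Finset.mem_filter.mp hB).2
      omega
    have hd2 : Disjoint (A ∪ B) W := by
      rw [Finset.disjoint_left]
      intro t hAB hW
      have hw := (Finset.mem_filter.mp hW).2
      rcases Finset.mem_union.mp hAB with h | h
      · have := (Finset.mem_filter.mp h).2; omega
      · have := (Finset.mem_filter.mp h).2; omega
    calc A.card + B.card + W.card = (A ∪ B ∪ W).card := by
          rw [Finset.card_union_of_disjoint hd2, Finset.card_union_of_disjoint hd1]
    _ ≤ T.card := Finset.card_le_card hsub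
  omega

lemma cycle_core (hS : S ⊆ Finset.Icc (0:ℤ) (s:ℤ)) {T : Finset ℤ} {x y : ℤ}
    (hxy : x < y) (hA : stateSet S s T x = stateSet S s T y) :
    ∀ k : ℕ, ∀ q t : ℤ, t ∈ T → t ≤ y → q - t ∈ S → x < q →
      ((x + s + 1 - q).toNat ≤ k) →
      ∃ w ∈ T.filter (fun t => x < t ∧ t ≤ y), ∃ m : ℤ, q - (w + m * (y - x)) ∈ S := by
  intro k
  induction k with
  | zero =>
    intro q t ht hty hts hxq hk
    have hb := sub_mem_bounds' hS hts
    have htx : x < t := by omega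
    exact ⟨t, Finset.mem_filter.mpr ⟨ht, htx, hty⟩, 0, by simpa using hts⟩
  | succ k ih =>
    intro q t ht hty hts hxq hk
    have hb := sub_mem_bounds' hS hts
    rcases lt_or_ge x t with htx | htx
    · exact ⟨t, Finset.mem_filter.mpr ⟨ht, htx, hty⟩, 0, by simpa using hts⟩
    · have hqs : q ≤ x + s := by omega
      have hj : q - x ∈ stateSet S s T x := by
        rw [mem_stateSet']
        exact ⟨⟨by omega, by omega⟩, t, ht, htx, by rw [show x + (q - x) - t = q - t by ring]; exact hts⟩
      rw [hA, mem_stateSet'] at hj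
      obtain ⟨-, t', ht', ht'y, ht's⟩ := hj
      have hq' : y + (q - x) = q + (y - x) := by ring
      obtain ⟨w, hw, m, hm⟩ := ih (q + (y - x)) t' ht' ht'y
        (by rw [← hq']; exact ht's) (by omega) (by omega)
      exact ⟨w, hw, m - 1, by rw [show q - (w + (m-1)*(y-x)) = q + (y-x) - (w + m*(y-x)) by ring]; exact hm⟩

lemma cycle_good (hS : S ⊆ Finset.Icc (0:ℤ) (s:ℤ)) {T : Finset ℤ} {x y : ℤ}
    (hxy : x < y)
    (hcov : ∀ q : ℤ, x < q → q ≤ y → ∃ t ∈ T, q - t ∈ S)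
    (hA : stateSet S s T x = stateSet S s T y) :
    GoodPair S (T.filter (fun t => x < t ∧ t ≤ y)).card (y - x).toNat := by
  classical
  set ℓ : ℤ := y - x with hℓdef
  have hℓpos : 0 < ℓ := by omega
  set W := T.filter (fun t => x < t ∧ t ≤ y) with hW
  set Tset : Set ℤ := {z | ∃ w ∈ W, ∃ m : ℤ, z = w + m * ℓ - (x+1)} with hTset
  have hcast : ((ℓ.toNat : ℤ)) = ℓ := by omega
  refine ⟨by omega, Tset, ?_, ?_, ?_⟩
  · intro z
    rw [hcast]
    constructor
    · rintro ⟨w, hw, m, rfl⟩; exact ⟨w, hw, m + 1, by ring⟩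
    · rintro ⟨w, hw, m, he⟩
      refine ⟨w, hw, m - 1, ?_⟩
      have : (m - 1) * ℓ = m * ℓ - ℓ := by ring
      omega
  · ext p
    simp only [Set.mem_univ, iff_true]
    rw [Set.mem_add]
    have hp' : ∃ q d : ℤ, x < q ∧ q ≤ y ∧ p + (x + 1) = q + d * ℓ := by
      refine ⟨x + 1 + (p % ℓ), (p - p % ℓ) / ℓ, by have := Int.emod_nonneg p (by omega : ℓ ≠ 0); omega,
        by have := Int.emod_lt_of_pos p hℓpos; omega, ?_⟩
      have h1 : ℓ ∣ p - p % ℓ := Int.dvd_self_sub_emod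
      rw [Int.ediv_mul_cancel h1]
      ring
    obtain ⟨q, d, hq1, hq2, hqd⟩ := hp'
    obtain ⟨t, ht, hts⟩ := hcov q hq1 hq2
    have hb := sub_mem_bounds' hS hts
    obtain ⟨w, hw, m, hm⟩ := cycle_core hS hxy hA (x + s + 1 - q).toNat q t ht (by omega) hts hq1 le_rfl
    refine ⟨w + (m + d) * ℓ - (x+1), ⟨w, hw, m + d, rfl⟩, q - (w + m * ℓ), hm, ?_⟩
    have : (m + d) * ℓ = m * ℓ + d * ℓ := by ring
    omega
  · rw [hcast]
    have himg : Tset ∩ Set.Ico (0:ℤ) ℓ = ↑(W.image (· - (x+1))) := by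
      ext z
      simp only [Set.mem_inter_iff, Set.mem_Ico, Finset.coe_image, Set.mem_image,
        Finset.mem_coe]
      constructor
      · rintro ⟨⟨w, hw, m, rfl⟩, h0, h1⟩
        have hwb : x < w ∧ w ≤ y := (Finset.mem_filter.mp hw).2
        have hm0 : m = 0 := by
          rcases lt_trichotomy m 0 with h | h | h
          · nlinarith [mul_le_mul_of_nonneg_right (show m ≤ -1 by omega) hℓpos.le]
          · exact h
          · nlinarith [mul_le_mul_of_nonneg_right (show 1 ≤ m by omega) hℓpos.le]
        exact ⟨w, hw, by rw [hm0, zero_mul]; omega⟩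
      · rintro ⟨w, hw, rfl⟩
        have hwb : x < w ∧ w ≤ y := (Finset.mem_filter.mp hw).2
        exact ⟨⟨w, hw, 0, by ring⟩, by omega, by omega⟩
    rw [himg, Set.ncard_coe_finset, Finset.card_image_of_injective _ (sub_left_injective)]

lemma good_upper (hS : S ⊆ Finset.Icc (0:ℤ) (s:ℤ)) {T : Set ℤ} {ℓ : ℕ} (hl : 0 < ℓ)
    (hper : ∀ x : ℤ, x ∈ T ↔ x + (ℓ:ℤ) ∈ T) (hcov : T + (S:Set ℤ) = Set.univ) (m : ℕ) :
    tauZ S (m * ℓ) ≤ (m + s + 1) * (T ∩ Set.Ico (0:ℤ) (ℓ:ℤ)).ncard := by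
  classical
  set k := (T ∩ Set.Ico (0:ℤ) (ℓ:ℤ)).ncard with hk
  set ℓ' : ℤ := (ℓ:ℤ) with hℓ'
  set T' : Finset ℤ := (Finset.Ico (-(s:ℤ)*ℓ') ((m:ℤ)*ℓ' + ℓ')).filter (· ∈ T) with hT'
  have hsl : (s:ℤ) ≤ (s:ℤ) * ℓ' := le_mul_of_one_le_right (by positivity) (by omega)
  have hneg : (-(s:ℤ))*ℓ' = -((s:ℤ)*ℓ') := by ring
  have hcov' : Finset.Icc (1:ℤ) ((m * ℓ : ℕ):ℤ) ⊆ T' + S := by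
    intro p hp
    rw [Finset.mem_Icc] at hp
    have hpu : (p : ℤ) ∈ T + (S:Set ℤ) := by rw [hcov]; trivial
    obtain ⟨t, ht, hts⟩ := mem_addS.mp hpu
    have hb : 0 ≤ p - t ∧ p - t ≤ s := Finset.mem_Icc.mp (hS hts)
    have hpc : ((m * ℓ : ℕ):ℤ) = (m:ℤ) * ℓ' := by push_cast; ring
    refine mem_addF.mpr ⟨t, Finset.mem_filter.mpr ⟨Finset.mem_Ico.mpr ⟨by omega, by omega⟩, ht⟩, hts⟩
  have h1 : tauZ S (m*ℓ) ≤ T'.card := Nat.sInf_le ⟨T', rfl, hcov'⟩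
  have hpos : (0:ℤ) < ℓ' := by omega
  have hsub : T' ⊆ (Finset.Icc (-(s:ℤ)) (m:ℤ)).biUnion
      (fun j => (Finset.Ico (j*ℓ') (j*ℓ'+ℓ')).filter (· ∈ T)) := by
    intro z hz
    obtain ⟨hzI, hzT⟩ := Finset.mem_filter.mp hz
    rw [Finset.mem_Ico] at hzI
    set j := z / ℓ' with hj
    have hmod := Int.emod_nonneg z (show ℓ' ≠ 0 by omega)
    have hmod2 := Int.emod_lt_of_pos z hpos
    have hdm := Int.mul_ediv_add_emod z ℓ'
    have hcomm : j * ℓ' = ℓ' * (z / ℓ') := by rw [hj, mul_comm]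
    have hjl : -(s:ℤ) ≤ j := (Int.le_ediv_iff_mul_le hpos).mpr (by omega)
    have hjr : j ≤ (m:ℤ) := by
      by_contra h
      push_neg at h
      have h2 := (Int.le_ediv_iff_mul_le hpos).mp (by omega : (m:ℤ)+1 ≤ z / ℓ')
      have hze : ((m:ℤ)+1)*ℓ' = (m:ℤ)*ℓ' + ℓ' := by ring
      omega
    refine Finset.mem_biUnion.mpr ⟨j, Finset.mem_Icc.mpr ⟨hjl, hjr⟩,
      Finset.mem_filter.mpr ⟨Finset.mem_Ico.mpr ⟨by omega, by omega⟩, hzT⟩⟩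
  have hwin : ∀ j : ℤ, ((Finset.Ico (j*ℓ') (j*ℓ'+ℓ')).filter (· ∈ T)).card = k := by
    intro j
    have hcoe : (((Finset.Ico (j*ℓ') (j*ℓ'+ℓ')).filter (· ∈ T) : Finset ℤ) : Set ℤ)
        = T ∩ Set.Ico (j*ℓ') (j*ℓ'+ℓ') := by
      ext z; simp only [Finset.coe_filter, Finset.mem_Ico, Set.mem_setOf_eq,
        Set.mem_inter_iff, Set.mem_Ico]; tauto
    rw [← Set.ncard_coe_finset, hcoe, window_count hper j]
  have h2 : T'.card ≤ (m + s + 1) * k := by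
    calc T'.card ≤ _ := Finset.card_le_card hsub
    _ ≤ ∑ j ∈ Finset.Icc (-(s:ℤ)) (m:ℤ), ((Finset.Ico (j*ℓ') (j*ℓ'+ℓ')).filter (· ∈ T)).card :=
        Finset.card_biUnion_le
    _ = (Finset.Icc (-(s:ℤ)) (m:ℤ)).card * k := by
        rw [Finset.sum_congr rfl (fun j _ => hwin j), Finset.sum_const, smul_eq_mul]
    _ = (m + s + 1) * k := by rw [Int.card_Icc]; congr 1; omega
  omega

lemma good_k_le {k ℓ : ℕ} (h : GoodPair S k ℓ) : k ≤ ℓ := by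
  obtain ⟨hl, T, hper, hcov, hcnt⟩ := h
  rw [← hcnt]
  calc (T ∩ Set.Ico (0:ℤ) (ℓ:ℤ)).ncard ≤ (Set.Ico (0:ℤ) (ℓ:ℤ)).ncard :=
        Set.ncard_le_ncard Set.inter_subset_right (Set.finite_Ico _ _)
  _ = ℓ := by
      rw [← Finset.coe_Ico, Set.ncard_coe_finset, Int.card_Ico]
      omega

lemma main_lower (hS : S ⊆ Finset.Icc (0:ℤ) (s:ℤ)) (h0 : (0:ℤ) ∈ S) {μ : ℝ} (hμ0 : 0 ≤ μ)
    (hgood : ∀ k ℓ : ℕ, GoodPair S k ℓ → ℓ ≤ 2^s → μ * ℓ ≤ k) :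
    ∀ n : ℕ, μ * ((n:ℝ) - 2^s) ≤ (tauZ S n : ℝ) := by
  intro n
  induction n using Nat.strong_induction_on with
  | _ n ih =>
  rcases le_or_gt n (2^s) with hn | hn
  · have h1 : (n:ℝ) - 2^s ≤ 0 := by
      have : (n:ℝ) ≤ 2^s := by exact_mod_cast hn
      linarith
    have : μ * ((n:ℝ) - 2^s) ≤ 0 := mul_nonpos_of_nonneg_of_nonpos hμ0 h1
    exact this.trans (by positivity)
  · obtain ⟨T, hcard, hcov⟩ := tau_spec h0 n
    -- pigeonhole on states at positions 0, 1, ..., 2^s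
    have hpig : ∃ x ∈ Finset.Icc (0:ℤ) ((2^s : ℕ):ℤ), ∃ y ∈ Finset.Icc (0:ℤ) ((2^s : ℕ):ℤ),
        x ≠ y ∧ stateSet S s T x = stateSet S s T y := by
      apply Finset.exists_ne_map_eq_of_card_lt_of_maps_to
      · rw [Int.card_Icc, Finset.card_powerset, Int.card_Icc]
        have : ((s:ℤ) + 1 - 1).toNat = s := by omega
        rw [this]
        omega
      · intro x _
        rw [Finset.mem_coe, Finset.mem_powerset]
        exact Finset.filter_subset _ _
    obtain ⟨x₀, hx₀, y₀, hy₀, hne, hAeq⟩ := hpig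
    rw [Finset.mem_Icc] at hx₀ hy₀
    -- wlog x < y
    obtain ⟨x, y, hx, hy, hxy, hA⟩ :
        ∃ x y : ℤ, (0 ≤ x ∧ x ≤ ((2^s:ℕ):ℤ)) ∧ (0 ≤ y ∧ y ≤ ((2^s:ℕ):ℤ)) ∧ x < y ∧
          stateSet S s T x = stateSet S s T y := by
      rcases lt_or_gt_of_ne hne with h | h
      · exact ⟨x₀, y₀, hx₀, hy₀, h, hAeq⟩
      · exact ⟨y₀, x₀, hy₀, hx₀, h, hAeq.symm⟩
    set ℓn : ℕ := (y - x).toNat with hℓn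
    have hℓcast : ((ℓn : ℕ):ℤ) = y - x := by omega
    have hℓpos : 0 < ℓn := by omega
    have hℓle : ℓn ≤ 2^s := by omega
    set W := T.filter (fun t => x < t ∧ t ≤ y) with hWdef
    have hWle : W.card ≤ ℓn := by
      have hsub : W ⊆ Finset.Icc (x+1) y := by
        intro t ht
        have := (Finset.mem_filter.mp ht).2
        rw [Finset.mem_Icc]
        omega
      calc W.card ≤ (Finset.Icc (x+1) y).card := Finset.card_le_card hsub
      _ = ℓn := by rw [Int.card_Icc]; omega
    have hcovq : ∀ q : ℤ, x < q → q ≤ y → ∃ t ∈ T, q - t ∈ S := by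
      intro q h1 h2
      have hq : q ∈ Finset.Icc (1:ℤ) (n:ℤ) := by
        rw [Finset.mem_Icc]
        constructor
        · omega
        · have : ((2^s:ℕ):ℤ) < (n:ℤ) := by exact_mod_cast hn
          omega
      exact mem_addF.mp (hcov hq)
    have hgp : GoodPair S W.card ℓn := by
      have := cycle_good hS hxy hcovq hA
      rwa [← hWdef, ← hℓn] at this
    have hμW : μ * ℓn ≤ W.card := hgood _ _ hgp hℓle
    -- splice
    have hsp := splice hS hxy hcov hA
    have hℓlen : ℓn ≤ n := by omega
    have htau' : tauZ S (n - ℓn) ≤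
        ((T.filter (· ≤ x)) ∪ ((T.filter (fun t => y < t)).image (· - (y - x)))).card := by
      apply tau_le_of_cover
      have hcast : (((n - ℓn : ℕ)):ℤ) = (n:ℤ) - (y - x) := by
        push_cast [hℓlen]
        omega
      rw [hcast]
      exact hsp
    have hscard := splice_card (T := T) hxy
    rw [← hWdef] at hscard
    rw [hcard] at hscard
    have hkey : tauZ S (n - ℓn) + W.card ≤ tauZ S n := by omega
    have hih := ih (n - ℓn) (by omega)
    -- real arithmetic
    have hc1 : ((n - ℓn : ℕ):ℝ) = (n:ℝ) - (ℓn:ℝ) := by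
      push_cast [hℓlen]
      ring
    rw [hc1] at hih
    have hc2 : ((tauZ S (n - ℓn) : ℕ):ℝ) + (W.card:ℝ) ≤ (tauZ S n : ℝ) := by
      exact_mod_cast hkey
    nlinarith [hih, hμW, hc2]

open Classical in
noncomputable def cands (S : Finset ℤ) (s : ℕ) : Finset (ℕ × ℕ) :=
  ((Finset.range (2^s+1)) ×ˢ (Finset.Icc 1 (2^s))).filter (fun p => GoodPair S p.1 p.2)

lemma mem_cands {k ℓ : ℕ} :
    (k, ℓ) ∈ cands S s ↔ (k < 2^s + 1 ∧ (1 ≤ ℓ ∧ ℓ ≤ 2^s)) ∧ GoodPair S k ℓ := by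
  classical
  simp [cands, Finset.mem_filter, Finset.mem_product, Finset.mem_range, Finset.mem_Icc]

lemma good_one_one (h0 : (0:ℤ) ∈ S) : GoodPair S 1 1 := by
  refine ⟨one_pos, Set.univ, fun x => by simp, ?_, ?_⟩
  · ext p
    simp only [Set.mem_univ, iff_true]
    exact mem_addS.mpr ⟨p, trivial, by simpa⟩
  · rw [Set.univ_inter, show Set.Ico (0:ℤ) ((1:ℕ):ℤ) = {0} by ext z; simp; omega]
    exact Set.ncard_singleton 0

end OptCover

theorem optimal_periodic_cover_period_le (S : Finset ℤ) (s : ℕ)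
    (hSsub : S ⊆ Finset.Icc (0 : ℤ) (s : ℤ)) (h0 : (0 : ℤ) ∈ S) :
    ∃ (ℓ : ℤ) (T : Set ℤ), 0 < ℓ ∧ ℓ ≤ 2 ^ s ∧
      (∀ x : ℤ, x ∈ T ↔ x + ℓ ∈ T) ∧
      T + (S : Set ℤ) = Set.univ ∧
      ((T ∩ Set.Ico (0 : ℤ) ℓ).ncard : ℝ) / (ℓ : ℝ) = covDens S := by
  classical
  open OptCover in
  obtain ⟨⟨k₀, ℓ₀⟩, hmem, hmin⟩ := Finset.exists_min_image (cands S s)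
    (fun p => (p.1 : ℝ) / (p.2 : ℝ))
    ⟨(1, 1), mem_cands.mpr ⟨⟨by have h := Nat.two_pow_pos s; omega, le_refl 1, Nat.one_le_two_pow⟩,
      good_one_one h0⟩⟩
  obtain ⟨⟨hk₀, hℓ₀1, hℓ₀2⟩, hgp₀⟩ := mem_cands.mp hmem
  set μ : ℝ := (k₀ : ℝ) / (ℓ₀ : ℝ) with hμdef
  have hμ0 : 0 ≤ μ := by positivity
  have hgood : ∀ k ℓ : ℕ, GoodPair S k ℓ → ℓ ≤ 2^s → μ * ℓ ≤ k := by
    intro k ℓ hgp hle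
    have hkl := good_k_le hgp
    have hmem' : (k, ℓ) ∈ cands S s := mem_cands.mpr ⟨⟨by omega, hgp.1, hle⟩, hgp⟩
    have := hmin (k, ℓ) hmem'
    have hlp : (0:ℝ) < ℓ := by exact_mod_cast hgp.1
    calc μ * ℓ ≤ ((k:ℝ)/(ℓ:ℝ)) * ℓ := by
          apply mul_le_mul_of_nonneg_right this hlp.le
    _ = k := by field_simp
  have hlower := main_lower hSsub h0 hμ0 hgood
  -- μ ≤ tauZ S n / n for every n ≥ 1
  have hdens : ∀ n : ℕ+, μ ≤ (tauZ S n : ℝ) / ((n:ℕ) : ℝ) := by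
    intro n
    have hnp : (0:ℝ) < ((n:ℕ):ℝ) := by exact_mod_cast n.pos
    rw [le_div_iff₀ hnp]
    -- show μ * n ≤ tauZ S n using the K-trick
    have hkey : ∀ K : ℕ, 1 ≤ K → μ * ((n:ℕ):ℝ) ≤ (tauZ S n : ℝ) + μ * 2^s / K := by
      intro K hK
      have hKp : (0:ℝ) < (K:ℝ) := by exact_mod_cast hK
      have h1 := hlower (K * n)
      have h2 : (tauZ S (K * n) : ℝ) ≤ (K : ℝ) * (tauZ S n : ℝ) := by
        exact_mod_cast tau_mul h0 K (n:ℕ)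
      have h3 : ((K * (n:ℕ) : ℕ):ℝ) = (K:ℝ) * ((n:ℕ):ℝ) := by push_cast; ring
      rw [h3] at h1
      have h5 : (μ * ((n:ℕ):ℝ) - (tauZ S (n:ℕ) : ℝ)) ≤ μ * 2^s / K := by
        rw [le_div_iff₀ hKp]
        nlinarith [h1, h2]
      linarith
    have htend : Filter.Tendsto (fun K : ℕ => (tauZ S n : ℝ) + μ * 2^s / K)
        Filter.atTop (nhds ((tauZ S n : ℝ) + 0)) :=
      Filter.Tendsto.const_add _ (tendsto_const_div_atTop_nhds_zero_nat _)
    have := ge_of_tendsto htend (Filter.eventually_atTop.mpr ⟨1, fun K hK => hkey K hK⟩)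
    rw [add_zero] at this
    linarith
  have hge : μ ≤ covDens S := le_ciInf hdens
  -- other direction
  obtain ⟨hl₀pos, T₀, hper₀, hcov₀, hcnt₀⟩ := hgp₀
  have hbdd : BddBelow (Set.range (fun n : ℕ+ => (tauZ S n : ℝ) / ((n:ℕ):ℝ))) := by
    refine ⟨0, ?_⟩
    rintro r ⟨n, rfl⟩
    positivity
  have hle : covDens S ≤ μ := by
    have hub : ∀ m : ℕ, 1 ≤ m → covDens S ≤ μ + ((s+1) * μ) / m := by
      intro m hm
      have hml : 0 < m * ℓ₀ := by positivity
      have h1 : covDens S ≤ (tauZ S (m * ℓ₀) : ℝ) / ((m * ℓ₀ : ℕ):ℝ) :=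
        ciInf_le hbdd (⟨m * ℓ₀, hml⟩ : ℕ+)
      have h2 : (tauZ S (m * ℓ₀) : ℝ) ≤ ((m + s + 1) * k₀ : ℕ) := by
        have hgu := good_upper hSsub hl₀pos hper₀ hcov₀ m
        rw [hcnt₀] at hgu
        exact_mod_cast hgu
      have hmlr : (0:ℝ) < ((m * ℓ₀ : ℕ):ℝ) := by exact_mod_cast hml
      have h3 : ((m + s + 1) * k₀ : ℕ) / ((m * ℓ₀ : ℕ):ℝ) = μ + ((s+1) * μ) / m := by
        rw [hμdef]
        have hmr : (0:ℝ) < (m:ℝ) := by exact_mod_cast hm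
        have hlr : (0:ℝ) < (ℓ₀:ℝ) := by exact_mod_cast hl₀pos
        push_cast
        field_simp
        ring
      calc covDens S ≤ _ := h1
      _ ≤ ((m + s + 1) * k₀ : ℕ) / ((m * ℓ₀ : ℕ):ℝ) := by
          gcongr
      _ = μ + ((s+1) * μ) / m := h3
    have htend : Filter.Tendsto (fun m : ℕ => μ + ((s+1) * μ) / m)
        Filter.atTop (nhds (μ + 0)) :=
      Filter.Tendsto.const_add _ (tendsto_const_div_atTop_nhds_zero_nat _)
    have := ge_of_tendsto htend (Filter.eventually_atTop.mpr ⟨1, fun m hm => hub m hm⟩)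
    rw [add_zero] at this
    exact this
  have hcd : covDens S = μ := le_antisymm hle hge
  refine ⟨(ℓ₀ : ℤ), T₀, by exact_mod_cast hl₀pos, ?_, hper₀, hcov₀, ?_⟩
  · have : ((ℓ₀:ℤ)) ≤ ((2^s : ℕ):ℤ) := by exact_mod_cast hℓ₀2
    calc (ℓ₀:ℤ) ≤ ((2^s : ℕ):ℤ) := this
    _ = 2^s := by push_cast; ring
  · rw [hcnt₀, hcd, hμdef]
    norm_num
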